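/- arXiv:1604.03887 — 3 statements merged into one kernel-verified Lean document; each statement's English description precedes it below -/
import Mathlib

section
/- Let $X \subseteq \mathbb{R}^n$ be compact convex, $\omega$ a distance generating function with modulus 1, $V$ its Bregman distance, and for $x \in X$, $y \in \mathbb{R}^n$ define the prox-mapping $P_x(y) = \arg\min_{z \in X}\{\langle y, z\rangle + V(x,z)\}$. Then for every $u, x \in X$ and $y \in \mathbb{R}^n$: $V(P_x(y), u) \leq V(x,u) + \langle y, u - x\rangle + \tfrac{1}{2}\|y\|_*^2$, where $\|y\|_* = \max\{\langle x, y\rangle : \|x\| \leq 1\}$. -/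
open scoped RealInnerProductSpace

/-- The prox-mapping lemma: `V (P_x y) u ≤ V x u + ⟪y, u - x⟫ + (1/2) ‖y‖_*^2`. -/
theorem stmt_1 {n : ℕ} (X : Set (EuclideanSpace ℝ (Fin n)))
    (hXcompact : IsCompact X) (hXconvex : Convex ℝ X)
    (ω : EuclideanSpace ℝ (Fin n) → ℝ) (g : EuclideanSpace ℝ (Fin n) → EuclideanSpace ℝ (Fin n))
    (nn dn : EuclideanSpace ℝ (Fin n) → ℝ)
    -- `nn` is a norm on ℝ^n
    (hnn : ∀ x y, nn (x + y) ≤ nn x + nn y) (hnn₀ : ∀ x, (nn x = 0 ↔ x = 0))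
    (hnn_smul : ∀ (c : ℝ) x, nn (c • x) = |c| * nn x)
    -- `dn` is the dual norm of `nn`
    (hdn : ∀ y, IsGreatest {r : ℝ | ∃ x, nn x ≤ 1 ∧ ⟪x, y⟫ = r} (dn y))
    -- `ω` is continuously differentiable with gradient `g`, strongly convex with modulus 1
    (hgrad : ∀ x, HasGradientAt ω (g x) x) (hgcont : Continuous g)
    (hstrong : ∀ x ∈ X, ∀ z ∈ X, ω z ≥ ω x + ⟪g x, z - x⟫ + (1 / 2) * (nn (z - x)) ^ 2)
    (V : EuclideanSpace ℝ (Fin n) → EuclideanSpace ℝ (Fin n) → ℝ)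
    (hV : ∀ x z, V x z = ω z - ω x - ⟪g x, z - x⟫)
    (x u : EuclideanSpace ℝ (Fin n)) (hx : x ∈ X) (hu : u ∈ X)
    (y : EuclideanSpace ℝ (Fin n))
    (p : EuclideanSpace ℝ (Fin n)) (hp : p ∈ X)
    (hpmin : IsMinOn (fun z => ⟪y, z⟫ + V x z) X p) :
    V p u ≤ V x u + ⟪y, u - x⟫ + (1 / 2) * (dn y) ^ 2 := by
  have hnn0 : nn 0 = 0 := (hnn₀ 0).2 rfl
  have hnn_neg : ∀ v, nn (-v) = nn v := by
    intro v; simpa using hnn_smul (-1) v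
  have hnn_nonneg : ∀ v, 0 ≤ nn v := by
    intro v
    have h1 := hnn v (-v)
    simp [hnn0, hnn_neg] at h1
    linarith
  have hdn_nonneg : 0 ≤ dn y := (hdn y).2 ⟨0, by simp [hnn0], by simp⟩
  -- generalized Cauchy-Schwarz
  have hCS : ⟪y, x - p⟫ ≤ dn y * nn (x - p) := by
    rcases eq_or_ne (x - p) 0 with h | h
    · simp [h, hnn0]
    · have hpos : 0 < nn (x - p) :=
        lt_of_le_of_ne (hnn_nonneg _) (fun h' => h ((hnn₀ _).1 h'.symm))
      have hmem : ⟪x - p, y⟫ / nn (x - p) ∈ {r : ℝ | ∃ v, nn v ≤ 1 ∧ ⟪v, y⟫ = r} := by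
        refine ⟨(nn (x - p))⁻¹ • (x - p), ?_, ?_⟩
        · rw [hnn_smul, abs_of_pos (inv_pos.2 hpos)]
          field_simp
          exact le_rfl
        · rw [real_inner_smul_left, div_eq_inv_mul]
      have hle := (hdn y).2 hmem
      rw [real_inner_comm]
      exact (div_le_iff₀ hpos).1 hle
  -- first-order optimality
  have hA : 0 ≤ ⟪y - g x + g p, u - p⟫ := by
    set F : ℝ → ℝ := fun t => ⟪y - g x + g (p + t • (u - p)), u - p⟫ with hF
    have hFcont : Continuous F := by
      apply Continuous.inner
      · exact continuous_const.add
          (hgcont.comp (continuous_const.add (continuous_id.smul continuous_const)))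
      · exact continuous_const
    have key : ∀ t ∈ Set.Ioc (0:ℝ) 1, 0 ≤ F t := by
      intro t ht
      set z := p + t • (u - p) with hz
      have hzX : z ∈ X := by
        have hc := hXconvex hp hu (by linarith [ht.2] : (0:ℝ) ≤ 1 - t) ht.1.le (by ring)
        have : (1 - t) • p + t • u = z := by rw [hz]; module
        rwa [this] at hc
      have h1 : ⟪y, p⟫ + V x p ≤ ⟪y, z⟫ + V x z := hpmin hzX
      have h2 := hstrong z hzX p hp
      have hsq : (0:ℝ) ≤ (nn (p - z)) ^ 2 := sq_nonneg _
      rw [hV, hV] at h1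
      have hzp : z - p = t • (u - p) := by rw [hz]; module
      have hpz : p - z = (-t) • (u - p) := by rw [hz]; module
      have htF : 0 ≤ t * F t := by
        have e1 : ⟪y, z⟫ - ⟪y, p⟫ = t * ⟪y, u - p⟫ := by
          rw [← inner_sub_right, hzp, real_inner_smul_right]
        have e2 : ⟪g x, z - x⟫ - ⟪g x, p - x⟫ = t * ⟪g x, u - p⟫ := by
          rw [← inner_sub_right]
          have : z - x - (p - x) = t • (u - p) := by rw [hz]; module
          rw [this, real_inner_smul_right]
        have e3 : ⟪g z, p - z⟫ = -t * ⟪g z, u - p⟫ := by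
          rw [hpz, real_inner_smul_right]
        have hFt : F t = ⟪y, u - p⟫ - ⟪g x, u - p⟫ + ⟪g z, u - p⟫ := by
          rw [hF]
          simp only [← hz, inner_add_left, inner_sub_left]
        rw [hFt]
        nlinarith [h1, h2, hsq, e1, e2, e3]
      have := (mul_nonneg_iff_of_pos_left ht.1).1 htF
      exact this
    have h0 : Filter.Tendsto F (nhdsWithin 0 (Set.Ioi 0)) (nhds (F 0)) :=
      (hFcont.tendsto 0).mono_left nhdsWithin_le_nhds
    have hev : ∀ᶠ t in nhdsWithin (0:ℝ) (Set.Ioi 0), 0 ≤ F t := by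
      filter_upwards [Ioo_mem_nhdsGT_of_mem (Set.left_mem_Ico.2 one_pos)] with t ht
      exact key t ⟨ht.1, ht.2.le⟩
    have hF0 : 0 ≤ F 0 := ge_of_tendsto h0 hev
    simpa [hF] using hF0
  -- strong convexity at (x, p)
  have hC := hstrong x hx p hp
  have hne : nn (p - x) = nn (x - p) := by
    rw [← hnn_neg (x - p)]; congr 1; abel
  rw [hne] at hC
  -- put everything together
  rw [hV, hV]
  simp only [inner_add_left, inner_sub_left, inner_sub_right] at hA hCS hC ⊢
  nlinarith [hA, hCS, hC, sq_nonneg (dn y - nn (x - p)), hdn_nonneg, hnn_nonneg (x - p)]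
end

section
/- Let $I = \{s, \ldots, N\}$ be partitioned into $\mathcal{B}$ and $\mathcal{N}$, and let $\gamma_k > 0$, $\eta_k > 0$, $M_F, M_G \geq 0$, $D \geq 0$ be given, along with reals $c_k$ (for $k \in \mathcal{B}$). Suppose $\sum_{k\in\mathcal{N}}\gamma_k\eta_k + \sum_{k\in\mathcal{B}}\gamma_k c_k \leq D^2 + \tfrac{1}{2}\sum_{k\in\mathcal{B}}\gamma_k^2 M_F^2 + \tfrac{1}{2}\sum_{k\in\mathcal{N}}\gamma_k^2 M_G^2$ and $\tfrac{N-s+1}{2}\min_{k\in\mathcal{N}}\gamma_k\eta_k > D^2 + \tfrac{1}{2}\sum_{k\in\mathcal{B}}\gamma_k^2 M_F^2 + \tfrac{1}{2}\sum_{k\in\mathcal{N}}\gamma_k^2 M_G^2$. Then either $|\mathcal{B}| \geq (N-s+1)/2$ or $\sum_{k\in\mathcal{B}}\gamma_k c_k \leq 0$. In particular $\mathcal{B} \neq \emptyset$. -/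
theorem stmt_5 (s N : ℕ) (hsN : s ≤ N) (B 𝒩 : Finset ℕ)
    (hunion : B ∪ 𝒩 = Finset.Icc s N) (hdisj : Disjoint B 𝒩)
    (γ η c : ℕ → ℝ) (MF MG D : ℝ)
    (hγ : ∀ k ∈ Finset.Icc s N, 0 < γ k) (hη : ∀ k ∈ Finset.Icc s N, 0 < η k)
    (hMF : 0 ≤ MF) (hMG : 0 ≤ MG) (hD : 0 ≤ D)
    (hsum : ∑ k ∈ 𝒩, γ k * η k + ∑ k ∈ B, γ k * c k ≤
      D ^ 2 + (1 / 2) * ∑ k ∈ B, γ k ^ 2 * MF ^ 2 + (1 / 2) * ∑ k ∈ 𝒩, γ k ^ 2 * MG ^ 2)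
    (hmin : ∀ k ∈ 𝒩, ((N : ℝ) - (s : ℝ) + 1) / 2 * (γ k * η k) >
      D ^ 2 + (1 / 2) * ∑ k ∈ B, γ k ^ 2 * MF ^ 2 + (1 / 2) * ∑ k ∈ 𝒩, γ k ^ 2 * MG ^ 2) :
    B.Nonempty ∧
      ((B.card : ℝ) ≥ ((N : ℝ) - (s : ℝ) + 1) / 2 ∨ ∑ k ∈ B, γ k * c k ≤ 0) := by
  set R := D ^ 2 + (1 / 2) * ∑ k ∈ B, γ k ^ 2 * MF ^ 2 +
      (1 / 2) * ∑ k ∈ 𝒩, γ k ^ 2 * MG ^ 2 with hRdef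
  have h1 : 0 ≤ ∑ k ∈ B, γ k ^ 2 * MF ^ 2 :=
    Finset.sum_nonneg fun k _ => by positivity
  have h2 : 0 ≤ ∑ k ∈ 𝒩, γ k ^ 2 * MG ^ 2 :=
    Finset.sum_nonneg fun k _ => by positivity
  have hR : 0 ≤ R := by rw [hRdef]; nlinarith [sq_nonneg D]
  clear_value R
  have hNS : (0:ℝ) < (N:ℝ) - s + 1 := by
    have : (s:ℝ) ≤ N := by exact_mod_cast hsN
    linarith
  have hcardn : B.card + 𝒩.card = N + 1 - s := by
    rw [← Finset.card_union_of_disjoint hdisj, hunion, Nat.card_Icc]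
  have hcard : (B.card : ℝ) + 𝒩.card = (N:ℝ) - s + 1 := by
    have h' : B.card + 𝒩.card + s = N + 1 := by omega
    have := congrArg (Nat.cast : ℕ → ℝ) h'
    push_cast at this
    linarith
  set t := 2 * R / ((N:ℝ) - s + 1) with htdef
  have ht0 : 0 ≤ t := by rw [htdef]; positivity
  clear_value t
  have hlow : ∀ k ∈ 𝒩, t < γ k * η k := by
    intro k hk
    have h := hmin k hk
    rw [htdef]
    rw [div_lt_iff₀ hNS]
    linarith
  by_cases hB : (B.card : ℝ) ≥ ((N : ℝ) - (s : ℝ) + 1) / 2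
  · refine ⟨Finset.card_pos.mp ?_, Or.inl hB⟩
    by_contra h
    push_neg at h
    have h0 : (B.card : ℝ) = 0 := by exact_mod_cast Nat.le_zero.mp h
    linarith
  · push_neg at hB
    have h𝒩card : ((N:ℝ) - s + 1) / 2 < 𝒩.card := by linarith
    have h𝒩ne : 𝒩.Nonempty := by
      rw [← Finset.card_pos]
      have : (0:ℝ) < 𝒩.card := by linarith
      exact_mod_cast this
    have hsumlt : (𝒩.card : ℝ) * t < ∑ k ∈ 𝒩, γ k * η k := by
      have := Finset.sum_lt_sum_of_nonempty h𝒩ne hlow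
      simpa [Finset.sum_const, nsmul_eq_mul] using this
    have hRle : R ≤ (𝒩.card : ℝ) * t := by
      have heq : ((N:ℝ) - s + 1) / 2 * t = R := by
        rw [htdef]; field_simp
      nlinarith
    have hBlt : ∑ k ∈ B, γ k * c k < 0 := by linarith
    refine ⟨?_, Or.inr hBlt.le⟩
    rw [Finset.nonempty_iff_ne_empty]
    intro hBe
    rw [hBe] at hBlt
    simp at hBlt
end

section
/- Suppose $G(\cdot,\xi)$ is $\mu_G$-strongly convex on $X$ for each $\xi$, the Bregman distance satisfies $\tfrac12\|x-z\|^2 \leq V(x,z) \leq \tfrac{Q}{2}\|x-z\|^2$, and $x_{k+1} = P_{x_k}(\gamma_k G'(x_k,\xi_k))$ with $G(x_k,\xi_k) > \eta_k$. Then for every $x \in X$: $V(x_{k+1},x) \leq \left(1 - \tfrac{\mu_G\gamma_k}{Q}\right)V(x_k,x) - \gamma_k(\eta_k - G(x,\xi_k)) + \tfrac{1}{2}\gamma_k^2\|G'(x_k,\xi_k)\|_*^2$. -/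
open scoped RealInnerProductSpace


private lemma lin_deriv {n : ℕ} (a v x0 : EuclideanSpace ℝ (Fin n)) :
    HasDerivAt (fun t : ℝ => ⟪a, x0 + t • v⟫) ⟪a, v⟫ 0 := by
  have : (fun t : ℝ => ⟪a, x0 + t • v⟫) = fun t : ℝ => ⟪a, x0⟫ + t * ⟪a, v⟫ := by
    funext t; simp [inner_add_right, real_inner_smul_right]
  rw [this]
  simpa using ((hasDerivAt_id (0:ℝ)).mul_const (⟪a, v⟫)).const_add (⟪a, x0⟫)

private lemma grad_deriv {n : ℕ} (ω : EuclideanSpace ℝ (Fin n) → ℝ)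
    (gx1 v x0 : EuclideanSpace ℝ (Fin n)) (h : HasGradientAt ω gx1 x0) :
    HasDerivAt (fun t : ℝ => ω (x0 + t • v)) ⟪gx1, v⟫ 0 := by
  have hc : HasDerivAt (fun t : ℝ => x0 + t • v) v 0 := by
    simpa using ((hasDerivAt_id (0:ℝ)).smul_const v).const_add x0
  have h' : HasFDerivAt ω ((InnerProductSpace.toDual ℝ (EuclideanSpace ℝ (Fin n))) gx1)
      (x0 + (0:ℝ) • v) := by simpa using h.hasFDerivAt
  exact (by simpa [InnerProductSpace.toDual_apply_apply] using h'.comp_hasDerivAt 0 hc :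
    HasDerivAt (ω ∘ fun t : ℝ => x0 + t • v) ⟪gx1, v⟫ 0)

/-- Single-step contraction inequality for the strongly convex constraint-correction step. -/
theorem stmt_16 {n : ℕ} (X : Set (EuclideanSpace ℝ (Fin n)))
    (hXcompact : IsCompact X) (hXconvex : Convex ℝ X)
    (ω : EuclideanSpace ℝ (Fin n) → ℝ) (g : EuclideanSpace ℝ (Fin n) → EuclideanSpace ℝ (Fin n))
    (nn dn : EuclideanSpace ℝ (Fin n) → ℝ)
    -- `nn` is a norm and `dn` its dual norm
    (hnn : ∀ x y, nn (x + y) ≤ nn x + nn y) (hnn₀ : ∀ x, (nn x = 0 ↔ x = 0))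
    (hnn_smul : ∀ (c : ℝ) x, nn (c • x) = |c| * nn x)
    (hdn : ∀ y, IsGreatest {r : ℝ | ∃ x, nn x ≤ 1 ∧ ⟪x, y⟫ = r} (dn y))
    -- `ω` is continuously differentiable with gradient `g`, strongly convex with modulus 1
    (hgrad : ∀ x, HasGradientAt ω (g x) x) (hgcont : Continuous g)
    (hstrong : ∀ x ∈ X, ∀ z ∈ X, ω z ≥ ω x + ⟪g x, z - x⟫ + (1 / 2) * (nn (z - x)) ^ 2)
    (V : EuclideanSpace ℝ (Fin n) → EuclideanSpace ℝ (Fin n) → ℝ)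
    (hV : ∀ x z, V x z = ω z - ω x - ⟪g x, z - x⟫)
    -- Bregman distance sandwiched between (1/2)‖·‖² and (Q/2)‖·‖²
    (Q : ℝ) (hQ : 1 ≤ Q)
    (hVlow : ∀ x ∈ X, ∀ z ∈ X, (1 / 2) * (nn (x - z)) ^ 2 ≤ V x z)
    (hVup : ∀ x ∈ X, ∀ z ∈ X, V x z ≤ Q / 2 * (nn (x - z)) ^ 2)
    -- `Gk` is μG-strongly convex with subgradient `G'` at `xk`
    (μG : ℝ) (hμG : 0 < μG)
    (Gk : EuclideanSpace ℝ (Fin n) → ℝ)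
    (xk xk1 : EuclideanSpace ℝ (Fin n)) (hxk : xk ∈ X) (hxk1 : xk1 ∈ X)
    (G' : EuclideanSpace ℝ (Fin n))
    (hG' : ∀ x ∈ X, Gk x ≥ Gk xk + ⟪G', x - xk⟫ + μG / 2 * (nn (x - xk)) ^ 2)
    (γ η : ℝ) (hγ : 0 < γ) (hviol : Gk xk > η)
    (hprox : IsMinOn (fun z => ⟪γ • G', z⟫ + V xk z) X xk1) :
    ∀ x ∈ X, V xk1 x ≤ (1 - μG * γ / Q) * V xk x - γ * (η - Gk x)
      + (1 / 2) * γ ^ 2 * (dn G') ^ 2 := by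
  have hQ0 : (0:ℝ) < Q := lt_of_lt_of_le one_pos hQ
  -- nn is nonnegative and symmetric under negation
  have hnn_nonneg : ∀ w, 0 ≤ nn w := by
    intro w
    have h0 : nn 0 = 0 := (hnn₀ 0).mpr rfl
    have h1 := hnn w (-w)
    have h2 : nn (-w) = nn w := by
      have := hnn_smul (-1) w; simpa using this
    simp [h0] at h1
    linarith [h1, h2.symm ▸ h1]
  have hsym : ∀ a b : EuclideanSpace ℝ (Fin n), nn (a - b) = nn (b - a) := by
    intro a b
    have := hnn_smul (-1) (b - a)
    simpa [neg_sub] using this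
  -- dual norm bound
  have hdn0 : 0 ≤ dn G' := by
    refine (hdn G').2 ⟨0, ?_, ?_⟩
    · simp [(hnn₀ 0).mpr rfl]
    · exact inner_zero_left _
  have hdual : ∀ w : EuclideanSpace ℝ (Fin n), ⟪w, G'⟫ ≤ dn G' * nn w := by
    intro w
    by_cases hw : w = 0
    · subst hw; simp [(hnn₀ 0).mpr rfl]
    · have hnnw : 0 < nn w := lt_of_le_of_ne (hnn_nonneg w) (fun h => hw ((hnn₀ w).mp h.symm))
      set u := (nn w)⁻¹ • w with hu
      have hnu : nn u = 1 := by
        rw [hu, hnn_smul, abs_of_nonneg (by positivity)]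
        field_simp
      have hmem : ⟪u, G'⟫ ≤ dn G' := (hdn G').2 ⟨u, le_of_eq hnu, rfl⟩
      have hiu : ⟪u, G'⟫ = (nn w)⁻¹ * ⟪w, G'⟫ := real_inner_smul_left _ _ _
      rw [hiu] at hmem
      calc ⟪w, G'⟫ = nn w * ((nn w)⁻¹ * ⟪w, G'⟫) := by field_simp
        _ ≤ nn w * dn G' := by
            exact mul_le_mul_of_nonneg_left hmem (le_of_lt hnnw)
        _ = dn G' * nn w := mul_comm _ _
  intro x hx
  set v := x - xk1 with hvdef
  -- first-order optimality at xk1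
  have FO : 0 ≤ γ * ⟪G', v⟫ + (⟪g xk1, v⟫ - ⟪g xk, v⟫) := by
    set h : ℝ → ℝ := fun t => ⟪γ • G', xk1 + t • v⟫ + V xk (xk1 + t • v) with hhdef
    have hd : HasDerivAt h (⟪γ • G', v⟫ + ⟪g xk1, v⟫ - ⟪g xk, v⟫) 0 := by
      have heq : h = fun t : ℝ => ⟪γ • G', xk1 + t • v⟫ + ω (xk1 + t • v)
          - (ω xk + ⟪g xk, (xk1 - xk) + t • v⟫) := by
        funext t
        rw [hhdef]; simp only [hV]
        have : xk1 + t • v - xk = (xk1 - xk) + t • v := by abel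
        rw [this]; ring
      rw [heq]
      exact ((lin_deriv (γ • G') v xk1).add (grad_deriv ω (g xk1) v xk1 (hgrad xk1))).sub
        ((lin_deriv (g xk) v (xk1 - xk)).const_add (ω xk))
    have hslope : Filter.Tendsto (slope h 0) (nhdsWithin 0 (Set.Ioi 0))
        (nhds (⟪γ • G', v⟫ + ⟪g xk1, v⟫ - ⟪g xk, v⟫)) :=
      (hasDerivAt_iff_tendsto_slope.1 hd).mono_left
        (nhdsWithin_mono _ (fun t ht => ne_of_gt ht))
    have hge : 0 ≤ ⟪γ • G', v⟫ + ⟪g xk1, v⟫ - ⟪g xk, v⟫ := by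
      refine ge_of_tendsto hslope ?_
      filter_upwards [Ioo_mem_nhdsGT_of_mem (Set.left_mem_Ico.2 one_pos)] with t ht
      have hmem : xk1 + t • v ∈ X := by
        have : xk1 + t • v = (1 - t) • xk1 + t • x := by
          rw [hvdef]; module
        rw [this]
        exact hXconvex hxk1 hx (by linarith [ht.2]) (le_of_lt ht.1) (by ring)
      have hmin : h 0 ≤ h t := by
        have h0 : h 0 = ⟪γ • G', xk1⟫ + V xk xk1 := by simp [hhdef]
        have := isMinOn_iff.1 hprox _ hmem
        simpa [h0, hhdef] using this
      simp only [slope_def_field, div_eq_mul_inv]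
      rw [sub_zero]
      exact mul_nonneg (by linarith) (inv_nonneg.2 (le_of_lt ht.1))
    have : ⟪γ • G', v⟫ = γ * ⟪G', v⟫ := real_inner_smul_left _ _ _
    linarith [this ▸ hge]
  -- three-point identity
  have TP : ⟪g xk1, v⟫ - ⟪g xk, v⟫ = V xk x - V xk1 x - V xk xk1 := by
    simp only [hV]
    have e1 : ⟪g xk, x - xk⟫ = ⟪g xk, v⟫ + ⟪g xk, xk1 - xk⟫ := by
      rw [← inner_add_right]; congr 1; rw [hvdef]; abel
    have e2 : ⟪g xk1, x - xk1⟫ = ⟪g xk1, v⟫ := by rw [hvdef]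
    rw [e1, e2]; ring
  -- split v
  have hsplit : γ * ⟪G', v⟫ = γ * ⟪G', x - xk⟫ + γ * ⟪G', xk - xk1⟫ := by
    have : ⟪G', v⟫ = ⟪G', x - xk⟫ + ⟪G', xk - xk1⟫ := by
      rw [← inner_add_right]; congr 1; rw [hvdef]; abel
    rw [this]; ring
  -- strong convexity bound
  have B : γ * ⟪G', x - xk⟫ ≤ γ * (Gk x - η) - γ * (μG / 2) * (nn (x - xk)) ^ 2 := by
    have h1 := hG' x hx
    nlinarith [mul_le_mul_of_nonneg_left (by linarith [h1] : ⟪G', x - xk⟫ ≤ Gk x - Gk xk - μG / 2 * (nn (x - xk)) ^ 2) (le_of_lt hγ)]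
  -- quadratic growth conversion
  have C : μG * γ / Q * V xk x ≤ γ * (μG / 2) * (nn (x - xk)) ^ 2 := by
    have h1 := hVup xk hxk x hx
    have h2 : nn (xk - x) = nn (x - xk) := hsym xk x
    rw [h2] at h1
    have h3 : μG * γ / Q * V xk x ≤ μG * γ / Q * (Q / 2 * (nn (x - xk)) ^ 2) :=
      mul_le_mul_of_nonneg_left h1 (by positivity)
    have h4 : μG * γ / Q * (Q / 2 * (nn (x - xk)) ^ 2) = γ * (μG / 2) * (nn (x - xk)) ^ 2 := by
      field_simp
    linarith [h4 ▸ h3]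
  -- dual-norm / Young bound
  have D : γ * ⟪G', xk - xk1⟫ ≤ γ * (dn G' * nn (xk - xk1)) := by
    have := hdual (xk - xk1)
    rw [real_inner_comm] at this
    exact mul_le_mul_of_nonneg_left this (le_of_lt hγ)
  have E : 1 / 2 * (nn (xk - xk1)) ^ 2 ≤ V xk xk1 := hVlow xk hxk xk1 hxk1
  have F : γ * (dn G' * nn (xk - xk1)) - 1 / 2 * (nn (xk - xk1)) ^ 2
      ≤ 1 / 2 * γ ^ 2 * (dn G') ^ 2 := by
    nlinarith [sq_nonneg (γ * dn G' - nn (xk - xk1))]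
  have goal_eq : (1 - μG * γ / Q) * V xk x = V xk x - μG * γ / Q * V xk x := by ring
  linarith [FO, TP, hsplit, B, C, D, E, F, goal_eq]
end
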